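/- Let c > 0 and consider the cubic polynomial p(z) = (1 − z²)(2 + z) + c over the complex numbers. Then p has exactly one root with nonnegative real part; this root is real and strictly greater than 1; p has no purely imaginary roots; and the other two roots of p (counted with multiplicity) both have real part strictly less than −1. -/
import Mathlib


open Complex

theorem stmt18 (c : ℝ) (hc : 0 < c) :
    ∃ (r : ℝ) (z₁ z₂ : ℂ), 1 < r ∧ z₁.re < -1 ∧ z₂.re < -1 ∧
      -- factorization of p (with leading coefficient −1), so the roots of p counted
      -- with multiplicity are exactly r, z₁, z₂
      (∀ z : ℂ, (1 - z ^ 2) * (2 + z) + (c : ℂ) =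
        -((z - (r : ℂ)) * (z - z₁) * (z - z₂))) ∧
      -- r is the unique root with nonnegative real part, and it is real and > 1
      (∀ z : ℂ, (1 - z ^ 2) * (2 + z) + (c : ℂ) = 0 → 0 ≤ z.re → z = (r : ℂ)) ∧
      -- p has no purely imaginary roots
      (∀ z : ℂ, (1 - z ^ 2) * (2 + z) + (c : ℂ) = 0 → z.re ≠ 0) := by
  -- find the real root r ∈ (1, 2+c]
  obtain ⟨r, hrmem, hgr⟩ : ∃ r ∈ Set.Icc (1:ℝ) (2+c), r^3+2*r^2-r-2 = c := by
    have hle : (1:ℝ) ≤ 2 + c := by linarith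
    have hcont : ContinuousOn (fun x : ℝ => x^3+2*x^2-x-2) (Set.Icc 1 (2+c)) := by
      fun_prop
    have hsub := intermediate_value_Icc hle hcont
    have hmem : c ∈ Set.Icc ((1:ℝ)^3+2*1^2-1-2) ((2+c)^3+2*(2+c)^2-(2+c)-2) := by
      constructor <;> nlinarith
    obtain ⟨r, hr1, hr2⟩ := hsub hmem
    exact ⟨r, hr1, hr2⟩
  have hr1 : 1 < r := by
    rcases hrmem.1.lt_or_eq with h | h
    · exact h
    · exfalso; rw [← h] at hgr; norm_num at hgr; linarith
  set D : ℝ := -3*r^2 - 4*r + 8 with hD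
  set s : ℂ := if 0 ≤ D then ((Real.sqrt D : ℝ) : ℂ) else ((Real.sqrt (-D) : ℝ) : ℂ) * I with hsdef
  have hs : s ^ 2 = ((D : ℝ) : ℂ) := by
    rw [hsdef]
    split_ifs with h
    · rw [← Complex.ofReal_pow, Real.sq_sqrt h]
    · rw [mul_pow, I_sq, ← Complex.ofReal_pow, Real.sq_sqrt (by linarith)]
      push_cast; ring
  have hs0 : 0 ≤ s.re := by
    rw [hsdef]; split_ifs with h
    · simpa using Real.sqrt_nonneg D
    · simp
  have hsr : s.re < r := by
    rw [hsdef]; split_ifs with h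
    · simp only [Complex.ofReal_re]
      rw [show r = Real.sqrt (r^2) by rw [Real.sqrt_sq (by linarith)]]
      apply Real.sqrt_lt_sqrt h
      nlinarith
    · simp; linarith
  set z₁ : ℂ := (((-r-2)/2 : ℝ) : ℂ) - s/2 with hz1def
  set z₂ : ℂ := (((-r-2)/2 : ℝ) : ℂ) + s/2 with hz2def
  have hz1re : z₁.re < -1 := by
    have : z₁.re = (-r-2)/2 - s.re/2 := by
      rw [hz1def]; simp [Complex.sub_re, Complex.div_ofReal_re]
    rw [this]; linarith
  have hz2re : z₂.re < -1 := by
    have : z₂.re = (-r-2)/2 + s.re/2 := by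
      rw [hz2def]; simp [Complex.add_re, Complex.div_ofReal_re]
    rw [this]; linarith
  have hfact : ∀ z : ℂ, (1 - z ^ 2) * (2 + z) + (c : ℂ) =
      -((z - (r : ℂ)) * (z - z₁) * (z - z₂)) := by
    intro z
    have hrc : ((r:ℝ):ℂ)^3 + 2*((r:ℝ):ℂ)^2 - ((r:ℝ):ℂ) - 2 = (c:ℂ) := by
      exact_mod_cast congrArg (fun x : ℝ => (x : ℂ)) hgr
    have hsc : s ^ 2 = -3*((r:ℝ):ℂ)^2 - 4*((r:ℝ):ℂ) + 8 := by
      rw [hs, hD]; push_cast; ring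
    rw [hz1def, hz2def]
    push_cast
    linear_combination (((r:ℂ) - z) / 4) * hsc - hrc
  have hroots : ∀ z : ℂ, (1 - z ^ 2) * (2 + z) + (c : ℂ) = 0 →
      z = (r : ℂ) ∨ z = z₁ ∨ z = z₂ := by
    intro z hz
    rw [hfact z, neg_eq_zero, mul_eq_zero, mul_eq_zero] at hz
    rcases hz with (h | h) | h
    · exact Or.inl (sub_eq_zero.mp h)
    · exact Or.inr (Or.inl (sub_eq_zero.mp h))
    · exact Or.inr (Or.inr (sub_eq_zero.mp h))
  refine ⟨r, z₁, z₂, hr1, hz1re, hz2re, hfact, ?_, ?_⟩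
  · intro z hz hre
    rcases hroots z hz with h | h | h
    · exact h
    · exfalso; rw [h] at hre; linarith
    · exfalso; rw [h] at hre; linarith
  · intro z hz
    rcases hroots z hz with h | h | h
    · rw [h]; simp only [Complex.ofReal_re]; linarith
    · rw [h]; linarith
    · rw [h]; linarith
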